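/- arXiv:1008.2166 — 2 statements merged into one kernel-verified Lean document; each statement's English description precedes it below -/
import Mathlib

section
/- Let σ be a nonempty finite type and R = MvPolynomial σ (ZMod 2). Then the kernel of d equals the range of d: for every p ∈ R one has d(p) = 0 if and only if there exists q ∈ R with d(q) = p. Consequently all Z/2-homology groups of the chain complex (R, d) vanish. -/
open MvPolynomial


lemma aux_nat (n : ℕ) : ((n : ZMod 2) * ((n - 1 : ℕ) : ZMod 2)) = 0 := by
  rw [← Nat.cast_mul, ZMod.natCast_eq_zero_iff]
  rcases Nat.even_or_odd n with h | h
  · exact h.two_dvd.mul_right _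
  · exact ((Nat.Odd.sub_odd h odd_one).two_dvd).mul_left _

lemma pderiv_self_self {σ : Type*} (s : σ) (p : MvPolynomial σ (ZMod 2)) :
    pderiv s (pderiv s p) = 0 := by
  induction p using MvPolynomial.induction_on' with
  | monomial u a =>
    classical
    simp only [pderiv_monomial, Finsupp.tsub_apply, Finsupp.single_eq_same]
    rw [mul_assoc, aux_nat, mul_zero, map_zero]
  | add p q hp hq => simp [hp, hq]

lemma pderiv_comm' {σ : Type*} (s t : σ) (p : MvPolynomial σ (ZMod 2)) :
    pderiv s (pderiv t p) = pderiv t (pderiv s p) := by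
  classical
  rcases eq_or_ne s t with rfl | hst
  · rfl
  induction p using MvPolynomial.induction_on' with
  | monomial u a =>
    simp only [pderiv_monomial, Finsupp.tsub_apply,
      Finsupp.single_eq_of_ne' hst, Finsupp.single_eq_of_ne' (Ne.symm hst), Nat.sub_zero]
    rw [tsub_tsub, tsub_tsub, add_comm]
    congr 1
    ring
  | add p q hp hq => simp [hp, hq]

lemma dOp_apply {σ : Type*} [Fintype σ]
    (q : MvPolynomial σ (ZMod 2)) :
    (∑ s : σ, (pderiv s (R := ZMod 2)).toLinearMap) q = ∑ s : σ, pderiv s q := by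
  simp [LinearMap.sum_apply]

theorem ker_dOp_eq_range_dOp' (σ : Type*) [Fintype σ] [Nonempty σ]
    (p : MvPolynomial σ (ZMod 2)) :
    (∑ s : σ, (pderiv s (R := ZMod 2)).toLinearMap) p = 0 ↔
      ∃ q, (∑ s : σ, (pderiv s (R := ZMod 2)).toLinearMap) q = p := by
  constructor
  · intro h
    rw [dOp_apply] at h
    obtain ⟨s₀⟩ := ‹Nonempty σ›
    refine ⟨X s₀ * p, ?_⟩
    rw [dOp_apply]
    calc ∑ s : σ, pderiv s (X s₀ * p)
        = ∑ s : σ, (pderiv s (X s₀) * p + X s₀ * pderiv s p) :=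
          Finset.sum_congr rfl fun s _ => pderiv_mul
      _ = (∑ s : σ, pderiv s (X s₀) * p) + X s₀ * ∑ s : σ, pderiv s p := by
          rw [Finset.sum_add_distrib, Finset.mul_sum]
      _ = p := by
          rw [h, mul_zero, add_zero]
          rw [Finset.sum_eq_single s₀ (fun s _ hs => by rw [pderiv_X_of_ne (Ne.symm hs), zero_mul])
            (fun h => absurd (Finset.mem_univ s₀) h)]
          rw [pderiv_X_self, one_mul]
  · rintro ⟨q, rfl⟩
    simp only [dOp_apply, map_sum]
    rw [← Finset.sum_product' (s := Finset.univ) (t := Finset.univ)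
      (f := fun s t => pderiv t (pderiv s q))]
    refine Finset.sum_involution (fun a _ => a.swap)
      (fun a _ => by
        rw [show pderiv a.swap.2 (pderiv a.swap.1 q) = pderiv a.2 (pderiv a.1 q) from
          pderiv_comm' _ _ _]
        exact CharTwo.add_self_eq_zero _)
      (fun a _ hfa hsw => ?_)
      (fun a ha => Finset.mem_univ _) (fun a ha => Prod.swap_swap a)
    apply hfa
    have h2 : a.1 = a.2 := by simpa using congrArg Prod.snd hsw
    rw [show a.2 = a.1 from h2.symm]
    exact pderiv_self_self _ _

/-- The differential operator `d = Σ_{s∈σ} ∂/∂X_s` on `MvPolynomial σ (ZMod 2)`. -/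
noncomputable def dOp (σ : Type*) [Fintype σ] :
    MvPolynomial σ (ZMod 2) →ₗ[ZMod 2] MvPolynomial σ (ZMod 2) :=
  ∑ s : σ, (pderiv s).toLinearMap

/-- For a nonempty finite variable set, `ker d = range d`: the chain complex
`(MvPolynomial σ (ZMod 2), d)` is acyclic (all `Z/2`-homology groups vanish). -/
theorem ker_dOp_eq_range_dOp (σ : Type*) [Fintype σ] [Nonempty σ]
    (p : MvPolynomial σ (ZMod 2)) :
    dOp σ p = 0 ↔ ∃ q : MvPolynomial σ (ZMod 2), dOp σ q = p := by
  unfold dOp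
  exact ker_dOp_eq_range_dOp' σ p
end

section
/- Let (t, η_2, …, η_n) and (t, θ_2, …, θ_n) be two bases of V* with the same first element t, and let (u_1, …, u_n) and (w_1, …, w_n) be their dual bases in V. Then the following are equivalent: (i) there is a permutation π of {2, …, n} with η_j − θ_{π(j)} ∈ span{t} for all j; (ii) there is a permutation π of {2, …, n} with u_j = w_{π(j)} for all j. Moreover, when these equivalent conditions hold, u_1 = w_1 if and only if the sets {η_2, …, η_n} and {θ_2, …, θ_n} are equal (i.e., the two bases coincide up to order). -/
/-- Vectors in `(Z/2)^n` are determined by their values under a basis of the dual space. -/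
lemma aux_vec_ext (n : ℕ) (C : Module.Basis (Fin n) (ZMod 2) (Module.Dual (ZMod 2) (Fin n → ZMod 2)))
    {x y : Fin n → ZMod 2} (h : ∀ k, C k x = C k y) : x = y := by
  apply (Module.evalEquiv (ZMod 2) (Fin n → ZMod 2)).injective
  apply C.ext
  intro k
  simp [Module.evalEquiv_apply, h k]

/-- A functional vanishing on a predual family of a dual basis is zero. -/
lemma aux_func_ext (n : ℕ) (C : Module.Basis (Fin n) (ZMod 2) (Module.Dual (ZMod 2) (Fin n → ZMod 2)))
    (w : Fin n → (Fin n → ZMod 2))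
    (hw : ∀ j k, C j (w k) = if j = k then 1 else 0)
    (f : Module.Dual (ZMod 2) (Fin n → ZMod 2)) (hf : ∀ k, f (w k) = 0) : f = 0 := by
  let W : Module.Basis (Fin n) (ZMod 2) (Fin n → ZMod 2) :=
    C.dualBasis.map (Module.evalEquiv (ZMod 2) (Fin n → ZMod 2)).symm
  have hW : ∀ k, W k = w k := by
    intro k
    apply (Module.evalEquiv (ZMod 2) (Fin n → ZMod 2)).injective
    apply C.ext
    intro j
    simp [W, Module.evalEquiv_apply, Module.Basis.dualBasis_apply_self, hw j k, Finsupp.single_apply]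
  apply W.ext
  intro k
  rw [hW k]
  simp [hf k]

/-- Two bases of the dual space `V*` of `V = (Z/2)^n` with the same first element `t`,
together with their dual bases `u`, `w` in `V`.  Then: (i) the remaining elements of the
two bases agree modulo `t` up to a permutation iff (ii) the remaining dual-basis vectors
agree up to a permutation; and when these hold, `u 0 = w 0` iff the two bases coincide
up to order. -/
theorem dual_basis_congr_mod_first (n : ℕ) [NeZero n]
    (B C : Module.Basis (Fin n) (ZMod 2) (Module.Dual (ZMod 2) (Fin n → ZMod 2)))
    (t : Module.Dual (ZMod 2) (Fin n → ZMod 2))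
    (hB : B 0 = t) (hC : C 0 = t)
    (u w : Fin n → (Fin n → ZMod 2))
    (hu : ∀ j k, B j (u k) = if j = k then 1 else 0)
    (hw : ∀ j k, C j (w k) = if j = k then 1 else 0) :
    (((∃ π : Equiv.Perm (Fin n), π 0 = 0 ∧
        ∀ j ≠ 0, B j - C (π j) ∈ Submodule.span (ZMod 2) {t}) ↔
      (∃ π : Equiv.Perm (Fin n), π 0 = 0 ∧ ∀ j ≠ 0, u j = w (π j)))) ∧
    ((∃ π : Equiv.Perm (Fin n), π 0 = 0 ∧
        ∀ j ≠ 0, B j - C (π j) ∈ Submodule.span (ZMod 2) {t}) →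
      (u 0 = w 0 ↔
        {f : Module.Dual (ZMod 2) (Fin n → ZMod 2) | ∃ j ≠ 0, f = B j} =
          {f : Module.Dual (ZMod 2) (Fin n → ZMod 2) | ∃ j ≠ 0, f = C j})) := by
  -- basic evaluations
  have htu : ∀ k, t (u k) = if (0 : Fin n) = k then 1 else 0 := by
    intro k; rw [← hB]; exact hu 0 k
  have htw : ∀ k, t (w k) = if (0 : Fin n) = k then 1 else 0 := by
    intro k; rw [← hC]; exact hw 0 k
  constructor
  · constructor
    · -- (i) → (ii)
      rintro ⟨π, hπ0, hπ⟩
      refine ⟨π, hπ0, ?_⟩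
      intro j hj
      have hπj : π j ≠ 0 := by
        intro h; exact hj (π.injective (h.trans hπ0.symm))
      apply aux_vec_ext n C
      intro k
      rw [hw k (π j)]
      by_cases hk : k = 0
      · subst hk
        rw [hC, htu j]
        simp [Ne.symm hj, Ne.symm hπj]
      · have hπk : π.symm k ≠ 0 := by
          intro h
          apply hk
          have := congrArg π h
          rwa [π.apply_symm_apply, hπ0] at this
        obtain ⟨c, hc⟩ := Submodule.mem_span_singleton.mp (hπ (π.symm k) hπk)
        rw [π.apply_symm_apply] at hc
        have hCk : C k = B (π.symm k) - c • t := by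
          rw [hc]; abel
        rw [hCk]
        simp only [LinearMap.sub_apply, LinearMap.smul_apply, smul_eq_mul]
        rw [hu (π.symm k) j, htu j]
        simp [Ne.symm hj, Equiv.symm_apply_eq]
    · -- (ii) → (i)
      rintro ⟨π, hπ0, hπ⟩
      refine ⟨π, hπ0, ?_⟩
      intro j hj
      have hπj : π j ≠ 0 := by
        intro h; exact hj (π.injective (h.trans hπ0.symm))
      set a : ZMod 2 := (B j - C (π j)) (w 0) with ha
      have hf : B j - C (π j) - a • t = 0 := by
        apply aux_func_ext n C w hw
        intro k
        by_cases hk : k = 0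
        · subst hk
          simp only [LinearMap.sub_apply, LinearMap.smul_apply, smul_eq_mul, ← ha]
          rw [htw 0]
          simp
        · have hπk : π.symm k ≠ 0 := by
            intro h
            apply hk
            have := congrArg π h
            rwa [π.apply_symm_apply, hπ0] at this
          have hwk : w k = u (π.symm k) := by
            rw [hπ (π.symm k) hπk, π.apply_symm_apply]
          have e1 : B j (w k) = if j = π.symm k then 1 else 0 := by
            rw [hwk, hu j (π.symm k)]
          have e2 : C (π j) (w k) = if π j = k then 1 else 0 := hw (π j) k
          have e3 : t (w k) = 0 := by rw [htw k]; simp [Ne.symm hk]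
          simp only [LinearMap.sub_apply, LinearMap.smul_apply, smul_eq_mul, e1, e2, e3,
            mul_zero, sub_zero]
          simp [Equiv.eq_symm_apply]
      have : B j - C (π j) = a • t := by
        have := sub_eq_zero.mp hf
        exact this
      rw [this]
      exact Submodule.smul_mem _ _ (Submodule.mem_span_singleton_self t)
  · -- second part
    rintro ⟨π, hπ0, hπ⟩
    constructor
    · -- u 0 = w 0 → sets equal
      intro h0
      have hBeqC : ∀ j, j ≠ 0 → B j = C (π j) := by
        intro j hj
        have hπj : π j ≠ 0 := by
          intro h; exact hj (π.injective (h.trans hπ0.symm))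
        obtain ⟨c, hc⟩ := Submodule.mem_span_singleton.mp (hπ j hj)
        have hval := congrArg (fun f => f (w 0)) hc
        simp only [LinearMap.sub_apply, LinearMap.smul_apply, smul_eq_mul] at hval
        rw [htw 0, hw (π j) 0, ← h0, hu j 0] at hval
        simp [hj, hπj] at hval
        rw [hval] at hc
        simp only [zero_smul] at hc
        exact sub_eq_zero.mp hc.symm
      ext f
      simp only [Set.mem_setOf_eq]
      constructor
      · rintro ⟨j, hj, rfl⟩
        have hπj : π j ≠ 0 := by
          intro h; exact hj (π.injective (h.trans hπ0.symm))
        exact ⟨π j, hπj, hBeqC j hj⟩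
      · rintro ⟨k, hk, rfl⟩
        have hπk : π.symm k ≠ 0 := by
          intro h
          apply hk
          have := congrArg π h
          rwa [π.apply_symm_apply, hπ0] at this
        refine ⟨π.symm k, hπk, ?_⟩
        rw [hBeqC (π.symm k) hπk, π.apply_symm_apply]
    · -- sets equal → u 0 = w 0
      intro hset
      apply aux_vec_ext n C
      intro k
      rw [hw k 0]
      by_cases hk : k = 0
      · subst hk
        rw [hC, htu 0]
      · have hmem : C k ∈ {f : Module.Dual (ZMod 2) (Fin n → ZMod 2) | ∃ j ≠ 0, f = C j} :=
          ⟨k, hk, rfl⟩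
        rw [← hset] at hmem
        obtain ⟨j, hj, hjf⟩ := hmem
        rw [hjf, hu j 0]
        simp [hj, hk]
end
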